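/- Let X, Z be real matrices with X m×m invertible and Z (n−m)×m, and set N = XᵀX + ZᵀZ (so N is symmetric positive definite m×m). Define M as the n×m block matrix with top block (I − N)(I + N)⁻¹ and bottom block −2Z(I + N)⁻¹. Then MᵀM ≺ I. -/

import Mathlib

open Matrix

lemma aux_posdef {k : ℕ} (C : Matrix (Fin k) (Fin k) ℝ) (hC : C.PosDef)
    (B : Matrix (Fin k) (Fin k) ℝ) (hB : IsUnit B) : (Bᵀ * C * B).PosDef := by
  refine posDef_iff_dotProduct_mulVec.mpr ⟨?_, fun x hx => ?_⟩
  · have h := isHermitian_conjTranspose_mul_mul B hC.isHermitian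
    simpa using h
  · have hBx : B *ᵥ x ≠ 0 := by
      have hinj : Function.Injective (B.mulVec) :=
        mulVec_injective_iff_isUnit.mpr hB
      intro h
      exact hx (hinj (by simpa using h))
    have hpos := hC.dotProduct_mulVec_pos hBx
    have e : star x ⬝ᵥ ((Bᵀ * C * B) *ᵥ x) = star (B *ᵥ x) ⬝ᵥ (C *ᵥ (B *ᵥ x)) := by
      simp only [star_trivial]
      rw [← Matrix.mulVec_mulVec, ← Matrix.mulVec_mulVec, Matrix.dotProduct_mulVec,
        Matrix.vecMul_transpose]
    rw [e]
    exact hpos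

theorem stmt8 {m p : ℕ}
    (X : Matrix (Fin m) (Fin m) ℝ) (Z : Matrix (Fin p) (Fin m) ℝ)
    (hX : IsUnit X)
    (N : Matrix (Fin m) (Fin m) ℝ) (hN : N = Xᵀ * X + Zᵀ * Z)
    (M : Matrix (Fin m ⊕ Fin p) (Fin m) ℝ)
    (hM : M = Matrix.fromRows ((1 - N) * (1 + N)⁻¹) (-(2 : ℝ) • (Z * (1 + N)⁻¹))) :
    (1 - Mᵀ * M).PosDef := by
  set A := (1 + N)⁻¹ with hA
  have hNs : Nᵀ = N := by
    rw [hN]; simp [transpose_add, transpose_mul]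
  have hNpsd : N.PosSemidef := by
    rw [hN]
    have h1 := posSemidef_conjTranspose_mul_self X
    have h2 := posSemidef_conjTranspose_mul_self Z
    simpa using h1.add h2
  have h1N : (1 + N).PosDef := Matrix.PosDef.one.add_posSemidef hNpsd
  have hdet : IsUnit (1 + N).det := isUnit_iff_isUnit_det _ |>.mp h1N.isUnit
  have hA1 : (1 + N) * A = 1 := mul_nonsing_inv _ hdet
  have hA2 : A * (1 + N) = 1 := nonsing_inv_mul _ hdet
  have hAu : IsUnit A := by rw [hA]; exact isUnit_nonsing_inv_iff.mpr h1N.isUnit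
  have hone : (1 : Matrix (Fin m) (Fin m) ℝ) = Aᵀ * (1 + N) * (1 + N) * A := by
    have h : Aᵀ * (1 + N) = 1 := by
      have := congrArg Matrix.transpose hA1
      simpa [transpose_mul, transpose_add, hNs] using this
    rw [h, Matrix.one_mul, hA1]
  have key : (1 : Matrix (Fin m) (Fin m) ℝ) - Mᵀ * M
      = Aᵀ * ((4 : ℝ) • (Xᵀ * X)) * A := by
    rw [hM, transpose_fromRows, fromCols_mul_fromRows]
    nth_rewrite 1 [hone]
    rw [hN]
    simp only [transpose_smul, transpose_mul, transpose_sub, transpose_add, transpose_one,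
      transpose_transpose, smul_mul_assoc, mul_smul_comm, smul_smul, neg_smul, neg_neg,
      neg_mul, mul_neg]
    norm_num
    noncomm_ring
    simp only [smul_smul, ← Matrix.mul_assoc]
    norm_num
    have e4 : ∀ B : Matrix (Fin m) (Fin m) ℝ, (4 : Matrix (Fin m) (Fin m) ℝ) * B = (4 : ℝ) • B := by
      intro B
      have h41 : (4 : ℝ) • (1 : Matrix (Fin m) (Fin m) ℝ) = 4 := by
        rw [show (4 : ℝ) = ((4 : ℕ) : ℝ) by norm_num, Nat.cast_smul_eq_nsmul, nsmul_eq_mul,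
          mul_one]
        norm_num
      rw [← h41, smul_mul_assoc, Matrix.one_mul]
    simp only [e4]
    abel
  rw [key]
  have hXX : (Xᵀ * X).PosDef := by
    have := aux_posdef 1 Matrix.PosDef.one X hX
    simpa using this
  have h4 : ((4 : ℝ) • (Xᵀ * X)).PosDef := by
    refine posDef_iff_dotProduct_mulVec.mpr ⟨?_, fun x hx => ?_⟩
    · show ((4 : ℝ) • (Xᵀ * X))ᴴ = (4 : ℝ) • (Xᵀ * X)
      rw [conjTranspose_smul, star_trivial, hXX.isHermitian.eq]
    · have hp := hXX.dotProduct_mulVec_pos hx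
      simp only [smul_mulVec, dotProduct_smul, smul_eq_mul]
      exact mul_pos (by norm_num) hp
  exact aux_posdef _ h4 A hAu
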